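/- Let H be a simple graph with n₀ vertices and m > n₀ edges, let d ≥ 3 be fixed, and let G*(n,d) be the d-regular configuration multigraph on n vertices (obtained from a uniformly random perfect matching of {1,…,n}×{1,…,d}). Then P(H ⊆ G*(n,d)) ≤ n^{n₀} · (d/(n−2m))^m for all n > 2m; in particular this probability tends to 0 as n → ∞. -/

import Mathlib

open Finset Filter
open scoped Classical

/-- A uniformly random pairing (perfect matching) of the `n * d` half-edges
`Fin n × Fin d`: a fixed-point-free involution. -/
def Pairing (n d : ℕ) : Type :=
  {f : (Fin n × Fin d) ≃ (Fin n × Fin d) // (∀ x, f (f x) = x) ∧ ∀ x, f x ≠ x}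

instance (n d : ℕ) : Finite (Pairing n d) := by
  unfold Pairing; infer_instance

noncomputable instance (n d : ℕ) : Fintype (Pairing n d) :=
  Fintype.ofFinite _

/-- The multigraph of the configuration model has an edge between `i` and `j`. -/
def hasEdge {n d : ℕ} (f : Pairing n d) (i j : Fin n) : Prop :=
  ∃ k l : Fin d, f.1 (i, k) = (j, l)

/-- The configuration multigraph contains a copy of `H`. -/
def containsCopy {n₀ : ℕ} (H : SimpleGraph (Fin n₀)) {n d : ℕ} (f : Pairing n d) : Prop :=
  ∃ φ : Fin n₀ ↪ Fin n, ∀ u v : Fin n₀, H.Adj u v → hasEdge f (φ u) (φ v)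

/-- The probability that `G*(n,d)` contains a copy of `H`. -/
noncomputable def probContains (d n₀ : ℕ) (H : SimpleGraph (Fin n₀)) (n : ℕ) : ℝ :=
  ((Finset.univ.filter (fun f : Pairing n d => containsCopy H f)).card : ℝ) /
    (Fintype.card (Pairing n d) : ℝ)


abbrev FPF (α : Type) := {f : α → α // (∀ x, f (f x) = x) ∧ ∀ x, f x ≠ x}
noncomputable instance (α : Type) [Finite α] : Fintype (FPF α) := Fintype.ofFinite _
noncomputable def I (k : ℕ) : ℕ := Fintype.card (FPF (Fin k))

def FPF.congr {α β : Type} (e : α ≃ β) : FPF α ≃ FPF β where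
  toFun f := ⟨fun y => e (f.1 (e.symm y)), fun y => by simp [f.2.1], fun y h => f.2.2 (e.symm y) (by
    have := congrArg e.symm h; simpa using this)⟩
  invFun g := ⟨fun x => e.symm (g.1 (e x)), fun x => by simp [g.2.1], fun x h => g.2.2 (e x) (by
    have := congrArg e h; simpa using this)⟩
  left_inv f := by ext x; simp
  right_inv g := by ext y; simp

theorem card_FPF (α : Type) [Fintype α] : Fintype.card (FPF α) = I (Fintype.card α) := by
  rw [I]; exact Fintype.card_congr (FPF.congr (Fintype.equivFin α))

def fpfForcedEquiv (α : Type) [DecidableEq α] (s : Finset α) (p : α → α)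
    (hps : ∀ x ∈ s, p x ∈ s) (hpp : ∀ x ∈ s, p (p x) = x) (hpx : ∀ x ∈ s, p x ≠ x) :
    {f : FPF α // ∀ x ∈ s, f.1 x = p x} ≃ FPF {x : α // x ∉ s} where
  toFun f := ⟨fun x => ⟨f.1.1 x.1, by
      intro h
      have h2 : f.1.1 (f.1.1 x.1) = p (f.1.1 x.1) := f.2 _ h
      rw [f.1.2.1] at h2
      exact x.2 (h2 ▸ hps _ h)⟩,
    fun x => Subtype.ext (f.1.2.1 x.1),
    fun x h => f.1.2.2 x.1 (congrArg Subtype.val h)⟩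
  invFun g := ⟨⟨fun x => if h : x ∈ s then p x else (g.1 ⟨x, h⟩).1, by
      constructor
      · intro x
        by_cases h : x ∈ s
        · simp only [dif_pos h, dif_pos (hps x h), hpp x h]
        · simp only [dif_neg h, dif_neg (g.1 ⟨x, h⟩).2]
          exact congrArg Subtype.val (g.2.1 ⟨x, h⟩)
      · intro x
        by_cases h : x ∈ s
        · simp only [dif_pos h]; exact hpx x h
        · simp only [dif_neg h]
          exact fun he => g.2.2 ⟨x, h⟩ (Subtype.ext he)⟩,
    fun x hx => dif_pos hx⟩
  left_inv f := by
    apply Subtype.ext; apply Subtype.ext; funext x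
    by_cases h : x ∈ s
    · simp only [dif_pos h]; exact (f.2 x h).symm
    · simp only [dif_neg h]
  right_inv g := by
    apply Subtype.ext; funext x
    apply Subtype.ext
    simp only [dif_neg x.2]

theorem card_fpf_forced (α : Type) [Fintype α] [DecidableEq α] (s : Finset α) (p : α → α)
    (hps : ∀ x ∈ s, p x ∈ s) (hpp : ∀ x ∈ s, p (p x) = x) (hpx : ∀ x ∈ s, p x ≠ x)
    (t : Finset (FPF α)) (ht : ∀ f : FPF α, f ∈ t ↔ ∀ x ∈ s, f.1 x = p x) :
    t.card = I (Fintype.card α - s.card) := by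
  have h1 : t = Finset.univ.filter (fun f : FPF α => ∀ x ∈ s, f.1 x = p x) := by
    ext f
    simp only [Finset.mem_filter, Finset.mem_univ, true_and, ht]
  rw [h1, ← Fintype.card_subtype,
    Fintype.card_congr (fpfForcedEquiv α s p hps hpp hpx), card_FPF]
  congr 1
  rw [Fintype.card_subtype]
  simp [Finset.filter_not, Finset.card_sdiff_of_subset (Finset.subset_univ s)]

theorem I_rec (k : ℕ) : I (k + 2) = (k + 1) * I k := by
  have h0 : (Fintype.card (FPF (Fin (k+2)))) =
      ∑ b : Fin (k+2), (Finset.univ.filter (fun f : FPF (Fin (k+2)) => f.1 0 = b)).card := by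
    rw [← Finset.card_univ]
    exact Finset.card_eq_sum_card_fiberwise (fun f _ => Finset.mem_univ _)
  have hfib : ∀ b : Fin (k+2), b ≠ 0 →
      (Finset.univ.filter (fun f : FPF (Fin (k+2)) => f.1 0 = b)).card = I k := by
    intro b hb
    have key := card_fpf_forced (Fin (k+2)) {0, b} (Equiv.swap 0 b)
      (fun x hx => by
        simp only [Finset.mem_insert, Finset.mem_singleton] at hx ⊢
        rcases hx with rfl | rfl
        · simp [Equiv.swap_apply_left]
        · simp [Equiv.swap_apply_right])
      (fun x _ => Equiv.swap_apply_self _ _ _)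
      (fun x hx => by
        simp only [Finset.mem_insert, Finset.mem_singleton] at hx
        rcases hx with rfl | rfl
        · simp only [Equiv.swap_apply_left]; exact hb
        · simp only [Equiv.swap_apply_right]; exact fun h => hb h.symm)
      (Finset.univ.filter (fun f : FPF (Fin (k+2)) => f.1 0 = b))
      (by
        intro f
        simp only [Finset.mem_filter, Finset.mem_univ, true_and]
        constructor
        · intro h x hx
          simp only [Finset.mem_insert, Finset.mem_singleton] at hx
          rcases hx with rfl | rfl
          · rw [h, Equiv.swap_apply_left]
          · rw [Equiv.swap_apply_right, ← h, f.2.1]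
        · intro h
          have := h 0 (by simp)
          rwa [Equiv.swap_apply_left] at this)
    have hcard : ({0, b} : Finset (Fin (k+2))).card = 2 := by
      rw [Finset.card_insert_of_notMem (by simpa using hb.symm), Finset.card_singleton]
    rw [hcard, Fintype.card_fin] at key
    have hsimp : (k + 2 - 2) = k := by omega
    rw [hsimp] at key
    exact key
  have hzero : (Finset.univ.filter (fun f : FPF (Fin (k+2)) => f.1 0 = 0)).card = 0 := by
    rw [Finset.card_eq_zero, Finset.filter_eq_empty_iff]
    exact fun f _ => f.2.2 0
  rw [I, h0, ← Finset.sum_erase_add _ _ (Finset.mem_univ (0 : Fin (k+2))), hzero, add_zero]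
  rw [Finset.sum_congr rfl (fun b hb => hfib b (Finset.ne_of_mem_erase hb))]
  rw [Finset.sum_const, Finset.card_erase_of_mem (Finset.mem_univ _), Finset.card_univ,
    Fintype.card_fin, smul_eq_mul]
  congr 1

theorem I_pow_le (b : ℕ) : ∀ (m N : ℕ), b + 2 * m ≤ N + 1 → I (N - 2 * m) * b ^ m ≤ I N := by
  intro m
  induction m with
  | zero => intro N _; simpa using le_refl (I N)
  | succ m ih =>
    intro N h
    rcases Nat.eq_zero_or_pos b with rfl | hb
    · simp
    have hNe : N - 2 * m = (N - 2 * (m + 1)) + 2 := by omega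
    have hrec : I (N - 2 * m) = (N - 2 * (m + 1) + 1) * I (N - 2 * (m + 1)) := by
      rw [hNe, I_rec]
    calc I (N - 2 * (m + 1)) * b ^ (m + 1)
        = (b * I (N - 2 * (m + 1))) * b ^ m := by ring
      _ ≤ ((N - 2 * (m + 1) + 1) * I (N - 2 * (m + 1))) * b ^ m := by
          apply Nat.mul_le_mul_right
          apply Nat.mul_le_mul_right
          omega
      _ = I (N - 2 * m) * b ^ m := by rw [hrec]
      _ ≤ I N := ih N (by omega)

def pairingEquivFPF (n d : ℕ) : Pairing n d ≃ FPF (Fin n × Fin d) where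
  toFun f := ⟨⇑f.1, f.2⟩
  invFun g := ⟨(Function.Involutive.toPerm g.1 g.2.1), g.2⟩
  left_inv f := Subtype.ext (Equiv.ext fun _ => rfl)
  right_inv g := Subtype.ext rfl

theorem card_pairing (n d : ℕ) : Fintype.card (Pairing n d) = I (n * d) := by
  rw [Fintype.card_congr (pairingEquivFPF n d), card_FPF]
  simp

theorem card_filter_pairing (n d : ℕ) (t : Finset (Pairing n d))
    (t' : Finset (FPF (Fin n × Fin d)))
    (h : ∀ f : Pairing n d, f ∈ t ↔ pairingEquivFPF n d f ∈ t') : t.card = t'.card := by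
  apply Finset.card_bij (fun f _ => pairingEquivFPF n d f)
  · intro f hf; exact (h f).1 hf
  · intro f _ f' _ hh; exact (pairingEquivFPF n d).injective hh
  · intro g hg
    exact ⟨(pairingEquivFPF n d).symm g, (h _).2 (by rwa [Equiv.apply_symm_apply]),
      by rw [Equiv.apply_symm_apply]⟩

set_option maxHeartbeats 1000000 in
theorem card_B_le (n d n₀ m : ℕ) (H : SimpleGraph (Fin n₀)) [DecidableRel H.Adj]
    (hm : m = H.edgeFinset.card) (φ : Fin n₀ ↪ Fin n) (c : ↥H.edgeFinset → Fin d × Fin d) :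
    (Finset.univ.filter (fun f : Pairing n d =>
      ∀ e : ↥H.edgeFinset, f.1 (φ (Quot.out e.1).1, (c e).1)
        = (φ (Quot.out e.1).2, (c e).2))).card ≤ I (n * d - 2 * m) := by
  set Q : ((Fin n × Fin d) → (Fin n × Fin d)) → Prop := fun F =>
    ∀ e : ↥H.edgeFinset, F (φ (Quot.out e.1).1, (c e).1) = (φ (Quot.out e.1).2, (c e).2)
    with hQ
  rcases Finset.eq_empty_or_nonempty
      (Finset.univ.filter (fun f : Pairing n d => Q ⇑f.1)) with he | ⟨f₀, hf₀⟩
  · rw [he]; simp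
  rw [Finset.mem_filter] at hf₀
  have hq₀ : Q ⇑f₀.1 := hf₀.2
  set P1 : ↥H.edgeFinset → Fin n × Fin d := fun e => (φ (Quot.out e.1).1, (c e).1) with hP1
  set P2 : ↥H.edgeFinset → Fin n × Fin d := fun e => (φ (Quot.out e.1).2, (c e).2) with hP2
  have h12 : ∀ e, f₀.1 (P1 e) = P2 e := fun e => hq₀ e
  have h21 : ∀ e, f₀.1 (P2 e) = P1 e := fun e => by rw [← h12 e, f₀.2.1]
  have hne : ∀ e, P1 e ≠ P2 e := fun e h => f₀.2.2 (P1 e) (by rw [h12 e, h])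
  have hedge : ∀ e : ↥H.edgeFinset, Sym2.mk (Quot.out e.1).1 (Quot.out e.1).2 = e.1 := by
    intro e; exact Quot.out_eq e.1
  have hdisj : ∀ e e' : ↥H.edgeFinset, e ≠ e' →
      Disjoint ({P1 e, P2 e} : Finset (Fin n × Fin d)) {P1 e', P2 e'} := by
    intro e e' hee
    rw [Finset.disjoint_left]
    intro x hx hx'
    simp only [Finset.mem_insert, Finset.mem_singleton] at hx hx'
    have key : (P1 e = P1 e' ∧ P2 e = P2 e') ∨ (P1 e = P2 e' ∧ P2 e = P1 e') := by
      rcases hx with rfl | rfl <;> rcases hx' with h' | h'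
      · exact Or.inl ⟨h', by rw [← h12 e, h', h12 e']⟩
      · exact Or.inr ⟨h', by rw [← h12 e, h', h21 e']⟩
      · exact Or.inr ⟨by rw [← h21 e, h', h12 e'], h'⟩
      · exact Or.inl ⟨by rw [← h21 e, h', h21 e'], h'⟩
    apply hee
    apply Subtype.ext
    rw [← hedge e, ← hedge e']
    rcases key with ⟨ha, hb⟩ | ⟨ha, hb⟩
    · have h1 : (Quot.out e.1).1 = (Quot.out e'.1).1 := φ.injective (congrArg Prod.fst ha)
      have h2 : (Quot.out e.1).2 = (Quot.out e'.1).2 := φ.injective (congrArg Prod.fst hb)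
      rw [h1, h2]
    · have h1 : (Quot.out e.1).1 = (Quot.out e'.1).2 := φ.injective (congrArg Prod.fst ha)
      have h2 : (Quot.out e.1).2 = (Quot.out e'.1).1 := φ.injective (congrArg Prod.fst hb)
      rw [h1, h2, Sym2.eq_swap]
  set s : Finset (Fin n × Fin d) :=
    Finset.univ.biUnion (fun e : ↥H.edgeFinset => {P1 e, P2 e}) with hs
  have hscard : s.card = 2 * m := by
    rw [hs, Finset.card_biUnion (fun e _ e' _ h => hdisj e e' h)]
    have : ∀ e : ↥H.edgeFinset, ({P1 e, P2 e} : Finset (Fin n × Fin d)).card = 2 := by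
      intro e
      rw [Finset.card_insert_of_notMem (by simpa using hne e), Finset.card_singleton]
    rw [Finset.sum_congr rfl (fun e _ => this e), Finset.sum_const, Finset.card_univ,
      Fintype.card_coe, ← hm, smul_eq_mul]
    ring
  have hmem12 : ∀ x ∈ s, (x ∈ Set.range P1 ∨ x ∈ Set.range P2) := by
    intro x hx
    rw [hs, Finset.mem_biUnion] at hx
    obtain ⟨e, _, hxe⟩ := hx
    simp only [Finset.mem_insert, Finset.mem_singleton] at hxe
    rcases hxe with rfl | rfl
    · exact Or.inl ⟨e, rfl⟩
    · exact Or.inr ⟨e, rfl⟩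
  have hmem : ∀ e, P1 e ∈ s ∧ P2 e ∈ s := by
    intro e
    constructor <;> rw [hs] <;> rw [Finset.mem_biUnion] <;> exact ⟨e, Finset.mem_univ _, by simp⟩
  -- transfer to FPF world and count
  have e1 : (Finset.univ.filter (fun f : Pairing n d => Q ⇑f.1)).card
      = (Finset.univ.filter (fun g : FPF (Fin n × Fin d) => Q g.1)).card := by
    apply card_filter_pairing
    intro f
    simp only [Finset.mem_filter, Finset.mem_univ, true_and]
    exact Iff.rfl
  rw [e1]
  have e2 := card_fpf_forced (Fin n × Fin d) s (⇑f₀.1)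
    (by
      intro x hx
      rcases hmem12 x hx with ⟨e, rfl⟩ | ⟨e, rfl⟩
      · rw [h12 e]; exact (hmem e).2
      · rw [h21 e]; exact (hmem e).1)
    (fun x _ => f₀.2.1 x) (fun x _ => f₀.2.2 x)
    (Finset.univ.filter (fun g : FPF (Fin n × Fin d) => ∀ x ∈ s, g.1 x = f₀.1 x))
    (fun g => by simp only [Finset.mem_filter, Finset.mem_univ, true_and])
  calc (Finset.univ.filter (fun g : FPF (Fin n × Fin d) => Q g.1)).card
      ≤ (Finset.univ.filter (fun g : FPF (Fin n × Fin d) => ∀ x ∈ s, g.1 x = f₀.1 x)).card := by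
        apply Finset.card_le_card
        intro g hg
        rw [Finset.mem_filter] at hg ⊢
        refine ⟨Finset.mem_univ _, ?_⟩
        have hg2 : ∀ e, g.1 (P1 e) = P2 e := fun e => hg.2 e
        intro x hx
        rcases hmem12 x hx with ⟨e, rfl⟩ | ⟨e, rfl⟩
        · rw [hg2 e, h12 e]
        · rw [h21 e, ← hg2 e]; exact g.2.1 _
    _ = I (Fintype.card (Fin n × Fin d) - s.card) := e2
    _ = I (n * d - 2 * m) := by rw [hscard]; simp

set_option maxHeartbeats 1000000 in
theorem card_good_le (n d n₀ m : ℕ) (H : SimpleGraph (Fin n₀)) [DecidableRel H.Adj]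
    (hm : m = H.edgeFinset.card) :
    (Finset.univ.filter (fun f : Pairing n d => containsCopy H f)).card
      ≤ n ^ n₀ * (d * d) ^ m * I (n * d - 2 * m) := by
  have hadj : ∀ e : ↥H.edgeFinset, H.Adj (Quot.out e.1).1 (Quot.out e.1).2 := by
    intro e
    have h1 : e.1 ∈ H.edgeSet := SimpleGraph.mem_edgeFinset.mp e.2
    rw [← Quot.out_eq e.1] at h1
    exact h1
  have step1 : (Finset.univ.filter (fun f : Pairing n d => containsCopy H f))
      ⊆ Finset.univ.biUnion (fun φ : Fin n₀ ↪ Fin n =>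
          Finset.univ.biUnion (fun c : ↥H.edgeFinset → Fin d × Fin d =>
            Finset.univ.filter (fun f : Pairing n d =>
              ∀ e : ↥H.edgeFinset, f.1 (φ (Quot.out e.1).1, (c e).1)
                = (φ (Quot.out e.1).2, (c e).2)))) := by
    intro f hf
    rw [Finset.mem_filter] at hf
    obtain ⟨φ, hφ⟩ := hf.2
    have hE : ∀ e : ↥H.edgeFinset, hasEdge f (φ (Quot.out e.1).1) (φ (Quot.out e.1).2) :=
      fun e => hφ _ _ (hadj e)
    choose k l hkl using hE
    refine Finset.mem_biUnion.2 ⟨φ, Finset.mem_univ _, Finset.mem_biUnion.2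
      ⟨fun e => (k e, l e), Finset.mem_univ _, Finset.mem_filter.2
        ⟨Finset.mem_univ _, fun e => hkl e⟩⟩⟩
  calc (Finset.univ.filter (fun f : Pairing n d => containsCopy H f)).card
      ≤ _ := Finset.card_le_card step1
    _ ≤ ∑ φ : Fin n₀ ↪ Fin n, (Finset.univ.biUnion
          (fun c : ↥H.edgeFinset → Fin d × Fin d =>
            Finset.univ.filter (fun f : Pairing n d =>
              ∀ e : ↥H.edgeFinset, f.1 (φ (Quot.out e.1).1, (c e).1)
                = (φ (Quot.out e.1).2, (c e).2)))).card := Finset.card_biUnion_le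
    _ ≤ ∑ φ : Fin n₀ ↪ Fin n, ∑ c : ↥H.edgeFinset → Fin d × Fin d,
          (Finset.univ.filter (fun f : Pairing n d =>
              ∀ e : ↥H.edgeFinset, f.1 (φ (Quot.out e.1).1, (c e).1)
                = (φ (Quot.out e.1).2, (c e).2))).card :=
        Finset.sum_le_sum (fun φ _ => Finset.card_biUnion_le)
    _ ≤ ∑ φ : Fin n₀ ↪ Fin n, ∑ c : ↥H.edgeFinset → Fin d × Fin d, I (n * d - 2 * m) :=
        Finset.sum_le_sum (fun φ _ => Finset.sum_le_sum
          (fun c _ => card_B_le n d n₀ m H hm φ c))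
    _ = Fintype.card (Fin n₀ ↪ Fin n) * (Fintype.card (↥H.edgeFinset → Fin d × Fin d)
          * I (n * d - 2 * m)) := by
        rw [Finset.sum_const, Finset.sum_const, Finset.card_univ, Finset.card_univ,
          smul_eq_mul, smul_eq_mul]
    _ ≤ n ^ n₀ * (d * d) ^ m * I (n * d - 2 * m) := by
        rw [Fintype.card_fun, Fintype.card_prod, Fintype.card_coe, ← hm, ← mul_assoc]
        simp only [Fintype.card_fin]
        apply Nat.mul_le_mul_right
        apply Nat.mul_le_mul_right
        rw [Fintype.card_embedding_eq, Fintype.card_fin, Fintype.card_fin]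
        exact Nat.descFactorial_le_pow n n₀

theorem stmt14 (d n₀ : ℕ) (hd : 3 ≤ d) (H : SimpleGraph (Fin n₀))
    [DecidableRel H.Adj] (m : ℕ) (hm : m = H.edgeFinset.card) (hmn : n₀ < m) :
    (∀ n : ℕ, 2 * m < n →
      probContains d n₀ H n ≤ (n : ℝ) ^ n₀ * ((d : ℝ) / ((n : ℝ) - 2 * m)) ^ m) ∧
    Tendsto (probContains d n₀ H) atTop (nhds 0) := by
  have main : ∀ n : ℕ, 2 * m < n →
      probContains d n₀ H n ≤ (n : ℝ) ^ n₀ * ((d : ℝ) / ((n : ℝ) - 2 * m)) ^ m := by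
    intro n hn
    have hx : (0 : ℝ) < (n : ℝ) - 2 * m := by
      have : ((2 * m : ℕ) : ℝ) < (n : ℕ) := by exact_mod_cast hn
      push_cast at this
      linarith
    have hd0 : (0 : ℝ) < (d : ℝ) := by
      have : 0 < d := by omega
      exact_mod_cast this
    -- the key natural number inequality
    have hb : (n - 2 * m) * d + 2 * m ≤ n * d + 1 := by
      have h1 : (n - 2 * m) * d + 2 * m * d = n * d := by
        rw [← add_mul]
        congr 1
        omega
      have h2 : 2 * m ≤ 2 * m * d := Nat.le_mul_of_pos_right _ (by omega)
      omega
    have hI := I_pow_le ((n - 2 * m) * d) m (n * d) hb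
    have hG := card_good_le n d n₀ m H hm
    have hkey : (Finset.univ.filter (fun f : Pairing n d => containsCopy H f)).card
        * ((n - 2 * m) * d) ^ m ≤ n ^ n₀ * (d * d) ^ m * I (n * d) := by
      calc (Finset.univ.filter (fun f : Pairing n d => containsCopy H f)).card
            * ((n - 2 * m) * d) ^ m
          ≤ (n ^ n₀ * (d * d) ^ m * I (n * d - 2 * m)) * ((n - 2 * m) * d) ^ m :=
            Nat.mul_le_mul_right _ hG
        _ = n ^ n₀ * (d * d) ^ m * (I (n * d - 2 * m) * ((n - 2 * m) * d) ^ m) := by ring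
        _ ≤ n ^ n₀ * (d * d) ^ m * I (n * d) := Nat.mul_le_mul_left _ hI
    -- move to the reals
    have hkeyR : ((Finset.univ.filter (fun f : Pairing n d => containsCopy H f)).card : ℝ)
        * (((n : ℝ) - 2 * m) * d) ^ m
        ≤ (n : ℝ) ^ n₀ * ((d : ℝ) * d) ^ m * (I (n * d) : ℝ) := by
      have := hkey
      have hcast : ((n - 2 * m : ℕ) : ℝ) = (n : ℝ) - 2 * m := by
        push_cast [Nat.cast_sub (le_of_lt hn)]
        ring
      calc ((Finset.univ.filter (fun f : Pairing n d => containsCopy H f)).card : ℝ)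
          * (((n : ℝ) - 2 * m) * d) ^ m
          = (((Finset.univ.filter (fun f : Pairing n d => containsCopy H f)).card
              * ((n - 2 * m) * d) ^ m : ℕ) : ℝ) := by
            push_cast [hcast]
            ring
        _ ≤ ((n ^ n₀ * (d * d) ^ m * I (n * d) : ℕ) : ℝ) := by exact_mod_cast hkey
        _ = (n : ℝ) ^ n₀ * ((d : ℝ) * d) ^ m * (I (n * d) : ℝ) := by push_cast; ring
    rw [probContains, card_pairing]
    rcases Nat.eq_zero_or_pos (I (n * d)) with h0 | hpos
    · rw [h0]
      simp only [Nat.cast_zero, div_zero]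
      positivity
    have hT : (0 : ℝ) < (I (n * d) : ℝ) := by exact_mod_cast hpos
    rw [div_le_iff₀ hT]
    have hden : (0 : ℝ) < (((n : ℝ) - 2 * m) * d) ^ m := pow_pos (mul_pos hx hd0) m
    rw [← mul_le_mul_iff_left₀ hden]
    calc ((Finset.univ.filter (fun f : Pairing n d => containsCopy H f)).card : ℝ)
        * (((n : ℝ) - 2 * m) * d) ^ m
        ≤ (n : ℝ) ^ n₀ * ((d : ℝ) * d) ^ m * (I (n * d) : ℝ) := hkeyR
      _ = (n : ℝ) ^ n₀ * ((d : ℝ) / ((n : ℝ) - 2 * m)) ^ m * (I (n * d) : ℝ)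
          * (((n : ℝ) - 2 * m) * d) ^ m := by
        rw [div_pow, mul_pow, mul_pow]
        field_simp
  refine ⟨main, ?_⟩
  -- the bound tends to 0
  have hb0 : Tendsto (fun n : ℕ => ((2 : ℝ) ^ n₀ * (d : ℝ) ^ m) * ((n : ℝ) - 2 * m)⁻¹)
      atTop (nhds 0) := by
    have h1 : Tendsto (fun n : ℕ => (n : ℝ) - 2 * m) atTop atTop := by
      apply tendsto_atTop_add_const_right
      exact tendsto_natCast_atTop_atTop
    have h2 := h1.inv_tendsto_atTop
    have h3 := h2.const_mul ((2 : ℝ) ^ n₀ * (d : ℝ) ^ m)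
    simpa using h3
  apply tendsto_of_tendsto_of_tendsto_of_le_of_le' (tendsto_const_nhds : Tendsto (fun _ : ℕ => (0:ℝ)) atTop (nhds 0)) hb0
  · filter_upwards with n
    exact div_nonneg (Nat.cast_nonneg _) (Nat.cast_nonneg _)
  · rw [eventually_atTop]
    refine ⟨4 * m + 2, fun n hn => ?_⟩
    have hm1 : 1 ≤ m := by omega
    have hx : (0 : ℝ) < (n : ℝ) - 2 * m := by
      have : ((2 * m : ℕ) : ℝ) < (n : ℕ) := by exact_mod_cast (by omega : 2 * m < n)
      push_cast at this; linarith
    have hx1 : (1 : ℝ) ≤ (n : ℝ) - 2 * m := by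
      have : ((2 * m + 1 : ℕ) : ℝ) ≤ (n : ℕ) := by exact_mod_cast (by omega : 2 * m + 1 ≤ n)
      push_cast at this; linarith
    have hn2 : (n : ℝ) ≤ 2 * ((n : ℝ) - 2 * m) := by
      have : ((4 * m : ℕ) : ℝ) ≤ (n : ℕ) := by exact_mod_cast (by omega : 4 * m ≤ n)
      push_cast at this; linarith
    calc probContains d n₀ H n
        ≤ (n : ℝ) ^ n₀ * ((d : ℝ) / ((n : ℝ) - 2 * m)) ^ m := main n (by omega)
      _ = (n : ℝ) ^ n₀ * (d : ℝ) ^ m / ((n : ℝ) - 2 * m) ^ m := by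
          rw [div_pow]; ring
      _ ≤ (2 * ((n : ℝ) - 2 * m)) ^ n₀ * (d : ℝ) ^ m / ((n : ℝ) - 2 * m) ^ m := by
          gcongr
      _ = (2 : ℝ) ^ n₀ * (d : ℝ) ^ m
            * (((n : ℝ) - 2 * m) ^ n₀ / ((n : ℝ) - 2 * m) ^ m) := by
          rw [mul_pow]; ring
      _ ≤ (2 : ℝ) ^ n₀ * (d : ℝ) ^ m * ((n : ℝ) - 2 * m)⁻¹ := by
          have h4 : ((n : ℝ) - 2 * m) ^ n₀ / ((n : ℝ) - 2 * m) ^ m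
              = (((n : ℝ) - 2 * m) ^ (m - n₀))⁻¹ := by
            rw [pow_sub₀ _ (ne_of_gt hx) (le_of_lt hmn), mul_inv, inv_inv]
            ring
          rw [h4]
          have h5 : ((n : ℝ) - 2 * m) ≤ ((n : ℝ) - 2 * m) ^ (m - n₀) :=
            le_self_pow₀ hx1 (by omega)
          have h6 : (((n : ℝ) - 2 * m) ^ (m - n₀))⁻¹ ≤ ((n : ℝ) - 2 * m)⁻¹ :=
            inv_anti₀ hx h5
          exact mul_le_mul_of_nonneg_left h6 (by positivity)
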